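/- Let 0 < σ < 1, ε ≥ 0, and 0 < ψ < 1. Define ρ = 1 - (1-ψ)(1-σ) and φ = ε/((1-σ)ψ). Then 0 < ρ < 1, and for all nonnegative reals a, b, if b ≤ σ·a + ε then b ≤ max(ρ·a, φ). -/

import Mathlib

theorem stmt_0 (σ ε ψ : ℝ) (hσ0 : 0 < σ) (hσ1 : σ < 1) (hε : 0 ≤ ε)
    (hψ0 : 0 < ψ) (hψ1 : ψ < 1) :
    (0 < 1 - (1 - ψ) * (1 - σ) ∧ 1 - (1 - ψ) * (1 - σ) < 1) ∧
    ∀ a b : ℝ, 0 ≤ a → 0 ≤ b → b ≤ σ * a + ε →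
      b ≤ max ((1 - (1 - ψ) * (1 - σ)) * a) (ε / ((1 - σ) * ψ)) := by
  have h1σ : 0 < 1 - σ := by linarith
  have hden : 0 < (1 - σ) * ψ := by positivity
  refine ⟨⟨by nlinarith, by nlinarith⟩, ?_⟩
  intro a b ha hb hab
  set φ := ε / ((1 - σ) * ψ) with hφ
  have hφnn : ε = φ * ((1 - σ) * ψ) := by rw [hφ, div_mul_cancel₀ _ hden.ne']
  rcases le_or_gt φ a with h | h
  · refine le_max_of_le_left ?_
    nlinarith [mul_le_mul_of_nonneg_left h h1σ.le]
  · refine le_max_of_le_right ?_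
    have hφ0 : 0 ≤ φ := by positivity
    nlinarith [mul_nonneg (mul_nonneg hφ0 h1σ.le) (by linarith : (0:ℝ) ≤ 1 - ψ), mul_le_mul_of_nonneg_left h.le hσ0.le]
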